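/- Strict complementarity characterizes relative interiors of optimal faces: for the primal problem max{cᵀx : Ax + u = b, x,u ≥ 0} and dual min{bᵀy : Aᵀy − v = c, y,v ≥ 0}, a pair of optimal solutions ((x*,u*),(y*,v*)) satisfies x* + v* > 0 and y* + u* > 0 (componentwise) if and only if (x*,u*) lies in the relative interior of the primal optimal face and (y*,v*) lies in the relative interior of the dual optimal face. -/

import Mathlib

open Matrix Finset

lemma farkas_fin {κ : Type} [Fintype κ] : ∀ (L : ℕ) (v : Fin L → (κ → ℝ)) (d : κ → ℝ),
    (¬ ∃ lam : Fin L → ℝ, (∀ i, 0 ≤ lam i) ∧ ∑ i, lam i • v i = d) →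
    ∃ z : κ → ℝ, (∀ i, 0 ≤ v i ⬝ᵥ z) ∧ d ⬝ᵥ z < 0 := by
  intro L
  induction L with
  | zero =>
    intro v d hne
    have hd : d ≠ 0 := by
      intro h
      exact hne ⟨0, fun i => le_refl 0, by simp [h]⟩
    refine ⟨-d, fun i => i.elim0, ?_⟩
    have h0 : 0 ≤ d ⬝ᵥ d := Finset.sum_nonneg fun i _ => mul_self_nonneg _
    have h1 : d ⬝ᵥ d ≠ 0 := (dotProduct_self_eq_zero (v := d)).not.mpr hd
    have : 0 < d ⬝ᵥ d := h0.lt_of_ne (Ne.symm h1)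
    simpa [dotProduct_neg] using this
  | succ L ih =>
    intro v d hne
    set v' : Fin L → κ → ℝ := fun i => v i.castSucc with hv'
    set w : κ → ℝ := v (Fin.last L) with hw
    have hne' : ¬ ∃ lam : Fin L → ℝ, (∀ i, 0 ≤ lam i) ∧ ∑ i, lam i • v' i = d := by
      rintro ⟨lam, hlam, hsum⟩
      refine hne ⟨fun i => Fin.lastCases 0 lam i, ?_, ?_⟩
      · intro i
        induction i using Fin.lastCases with
        | last => simp
        | cast i => simpa using hlam i
      · rw [Fin.sum_univ_castSucc]
        simp [hsum]
        exact hsum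
    obtain ⟨z, hz, hdz⟩ := ih v' d hne'
    by_cases hwz : 0 ≤ w ⬝ᵥ z
    · refine ⟨z, fun i => ?_, hdz⟩
      induction i using Fin.lastCases with
      | last => exact hwz
      | cast i => exact hz i
    push_neg at hwz
    set v'' : Fin L → κ → ℝ := fun i => v' i - ((v' i ⬝ᵥ z) / (w ⬝ᵥ z)) • w with hv''
    set d' : κ → ℝ := d - ((d ⬝ᵥ z) / (w ⬝ᵥ z)) • w with hd'
    have hne'' : ¬ ∃ lam : Fin L → ℝ, (∀ i, 0 ≤ lam i) ∧ ∑ i, lam i • v'' i = d' := by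
      rintro ⟨lam, hlam, hsum⟩
      have hmupos : 0 ≤ (d ⬝ᵥ z) / (w ⬝ᵥ z) - ∑ i, lam i * ((v' i ⬝ᵥ z) / (w ⬝ᵥ z)) := by
        have h1 : 0 < (d ⬝ᵥ z) / (w ⬝ᵥ z) := div_pos_of_neg_of_neg hdz hwz
        have h2 : ∑ i, lam i * ((v' i ⬝ᵥ z) / (w ⬝ᵥ z)) ≤ 0 := by
          apply Finset.sum_nonpos
          intro i _
          apply mul_nonpos_of_nonneg_of_nonpos (hlam i)
          exact div_nonpos_of_nonneg_of_nonpos (hz i) hwz.le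
        linarith
      refine hne ⟨fun i => Fin.lastCases
        ((d ⬝ᵥ z) / (w ⬝ᵥ z) - ∑ i, lam i * ((v' i ⬝ᵥ z) / (w ⬝ᵥ z))) lam i, ?_, ?_⟩
      · intro i
        induction i using Fin.lastCases with
        | last => simpa using hmupos
        | cast i => simpa using hlam i
      · rw [Fin.sum_univ_castSucc]
        simp only [Fin.lastCases_castSucc, Fin.lastCases_last]
        have : ∀ i : Fin L, lam i • v i.castSucc
            = lam i • v'' i + (lam i * ((v' i ⬝ᵥ z) / (w ⬝ᵥ z))) • w := by
          intro i
          rw [hv'']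
          simp only [smul_sub, smul_smul]
          abel
        rw [Finset.sum_congr rfl (fun i _ => this i), Finset.sum_add_distrib, hsum,
          ← Finset.sum_smul, hd', ← hw, sub_smul]
        abel
    obtain ⟨z', hz', hdz'⟩ := ih v'' d' hne''
    refine ⟨z' - ((w ⬝ᵥ z') / (w ⬝ᵥ z)) • z, fun i => ?_, ?_⟩
    · induction i using Fin.lastCases with
      | last =>
        rw [dotProduct_sub, dotProduct_smul, ← hw]
        rw [smul_eq_mul, div_mul_eq_mul_div, mul_div_assoc, div_self hwz.ne, mul_one, sub_self]
      | cast i =>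
        have h := hz' i
        rw [hv''] at h
        rw [sub_dotProduct, smul_dotProduct, smul_eq_mul] at h
        rw [dotProduct_sub, dotProduct_smul, smul_eq_mul]
        calc (0:ℝ) ≤ v' i ⬝ᵥ z' - v' i ⬝ᵥ z / (w ⬝ᵥ z) * (w ⬝ᵥ z') := h
        _ = v' i ⬝ᵥ z' - w ⬝ᵥ z' / (w ⬝ᵥ z) * (v' i ⬝ᵥ z) := by ring
    · have h := hdz'
      rw [hd', sub_dotProduct, smul_dotProduct, smul_eq_mul] at h
      rw [dotProduct_sub, dotProduct_smul, smul_eq_mul]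
      calc d ⬝ᵥ z' - w ⬝ᵥ z' / (w ⬝ᵥ z) * (d ⬝ᵥ z)
          = d ⬝ᵥ z' - d ⬝ᵥ z / (w ⬝ᵥ z) * (w ⬝ᵥ z') := by ring
      _ < 0 := h

lemma farkas' {ι κ : Type} [Fintype ι] [Fintype κ] (v : ι → κ → ℝ) (d : κ → ℝ)
    (hne : ¬ ∃ lam : ι → ℝ, (∀ i, 0 ≤ lam i) ∧ ∑ i, lam i • v i = d) :
    ∃ z : κ → ℝ, (∀ i, 0 ≤ v i ⬝ᵥ z) ∧ d ⬝ᵥ z < 0 := by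
  classical
  obtain ⟨e⟩ : Nonempty (Fin (Fintype.card ι) ≃ ι) := ⟨(Fintype.equivFin ι).symm⟩
  have h : ¬ ∃ lam : Fin (Fintype.card ι) → ℝ,
      (∀ i, 0 ≤ lam i) ∧ ∑ i, lam i • (v ∘ e) i = d := by
    rintro ⟨lam, hlam, hsum⟩
    refine hne ⟨lam ∘ e.symm, fun i => hlam _, ?_⟩
    rw [← Equiv.sum_comp e (fun i => (lam ∘ e.symm) i • v i)]
    simpa using hsum
  obtain ⟨z, hz, hdz⟩ := farkas_fin _ (v ∘ e) d h
  exact ⟨z, fun i => by simpa using hz (e.symm i), hdz⟩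

lemma tucker {ι : Type} [Fintype ι] [DecidableEq ι] (M : Matrix ι ι ℝ)
    (hskew : ∀ i j, M i j = - M j i) (k : ι) :
    ∃ w : ι → ℝ, (∀ i, 0 ≤ w i) ∧ (∀ i, 0 ≤ M.mulVec w i) ∧ 0 < w k + M.mulVec w k := by
  classical
  set g : ι ⊕ ι → ι → ℝ := Sum.elim (fun j => fun i => M i j) (fun i => -(Pi.single i 1)) with hg
  by_cases hex : ∃ lam : ι ⊕ ι → ℝ, (∀ i, 0 ≤ lam i) ∧ ∑ i, lam i • g i = Pi.single k 1
  · obtain ⟨lam, hlam, hsum⟩ := hex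
    set w : ι → ℝ := fun j => lam (Sum.inl j) with hwdef
    set s : ι → ℝ := fun i => lam (Sum.inr i) with hsdef
    have hsum' : M.mulVec w - s = Pi.single k 1 := by
      rw [Fintype.sum_sum_type] at hsum
      have h1 : ∑ j, lam (Sum.inl j) • g (Sum.inl j) = M.mulVec w := by
        funext i
        simp only [hg, Sum.elim_inl, Matrix.mulVec, dotProduct]
        rw [Finset.sum_apply]
        simp [mul_comm, hwdef]
      have h2 : ∑ i, lam (Sum.inr i) • g (Sum.inr i) = -s := by
        funext j
        rw [Finset.sum_apply]
        simp [hg, Pi.single_apply, mul_ite, hsdef]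
      rw [h1, h2] at hsum
      rw [← hsum]; abel
    have hMw : ∀ i, M.mulVec w i = (Pi.single k 1 : ι → ℝ) i + s i := by
      intro i
      have := congrFun hsum' i
      simp only [Pi.sub_apply] at this
      linarith
    refine ⟨w, fun i => hlam _, fun i => ?_, ?_⟩
    · rw [hMw i]
      have : (0:ℝ) ≤ (Pi.single k 1 : ι → ℝ) i := by
        rcases eq_or_ne i k with h | h <;> simp [h, Pi.single_apply]
      have := hlam (Sum.inr i)
      simp only [hsdef] at *
      linarith [hlam (Sum.inr i)]
    · rw [hMw k]
      simp only [Pi.single_eq_same]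
      have := hlam (Sum.inr k)
      have := hlam (Sum.inl k)
      simp only [hwdef, hsdef] at *
      linarith
  · obtain ⟨z, hz, hdz⟩ := farkas' g (Pi.single k 1) hex
    have hzn : ∀ i, z i ≤ 0 := by
      intro i
      have h1 := hz (Sum.inr i)
      simp only [hg, Sum.elim_inr, neg_dotProduct] at h1
      have h2 : Pi.single i (1:ℝ) ⬝ᵥ z = z i := by
        simp [dotProduct, Pi.single_apply]
      rw [h2] at h1
      linarith
    have hMz : ∀ i, 0 ≤ M.mulVec (-z) i := by
      intro i
      have h1 := hz (Sum.inl i)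
      simp only [hg, Sum.elim_inl] at h1
      have h2 : M.mulVec (-z) i = (fun i' => M i' i) ⬝ᵥ z := by
        simp only [Matrix.mulVec, dotProduct, Pi.neg_apply]
        apply Finset.sum_congr rfl
        intro j _
        rw [hskew i j]; ring
      rw [h2]; exact h1
    have hzk : z k < 0 := by
      have h2 : Pi.single k (1:ℝ) ⬝ᵥ z = z k := by
        simp [dotProduct, Pi.single_apply]
      rw [h2] at hdz; exact hdz
    refine ⟨-z, fun i => by simpa using hzn i, hMz, ?_⟩
    have := hMz k
    simp only [Pi.neg_apply]
    linarith

section Aux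
variable {E F : Type} [NormedAddCommGroup E] [NormedSpace ℝ E]

lemma affine_eq_on_span [NormedAddCommGroup F] [NormedSpace ℝ F]
    (g : E →ᵃ[ℝ] F) {S : Set E} {q : F} (h : ∀ p ∈ S, g p = q) :
    ∀ p ∈ affineSpan ℝ S, g p = q := by
  intro p hp
  have hS : S ⊆ ((affineSpan ℝ ({q} : Set F)).comap g : Set E) := by
    intro x hx
    simp only [AffineSubspace.coe_comap, Set.mem_preimage, SetLike.mem_coe]
    rw [AffineSubspace.mem_affineSpan_singleton]
    exact h x hx
  have := (affineSpan_le (k := ℝ)).mpr hS hp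
  simp only [AffineSubspace.mem_comap] at this
  exact (AffineSubspace.mem_affineSpan_singleton ℝ F).mp this

lemma mem_intrinsicInterior_of_open {S U : Set E} {s : E}
    (hs : s ∈ S) (hU : IsOpen U) (hsU : s ∈ U)
    (h : U ∩ (affineSpan ℝ S : Set E) ⊆ S) : s ∈ intrinsicInterior ℝ S := by
  refine ⟨⟨s, subset_affineSpan ℝ S hs⟩, ?_, rfl⟩
  apply interior_maximal (fun p hp => h ⟨hp, p.2⟩ : (Subtype.val ⁻¹' U : Set (affineSpan ℝ S)) ⊆ _)
    (hU.preimage continuous_subtype_val)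
  exact hsU

lemma exists_stretch_mem {S : Set E} {s z : E}
    (hs : s ∈ intrinsicInterior ℝ S) (hz : z ∈ S) :
    ∃ ε : ℝ, 0 < ε ∧ z + (1 + ε) • (s - z) ∈ S := by
  obtain ⟨s', hs', hval⟩ := hs
  have hsmem : s ∈ affineSpan ℝ S := hval ▸ s'.2
  have hzmem : z ∈ affineSpan ℝ S := subset_affineSpan ℝ S hz
  have hmem : ∀ t : ℝ, z + t • (s - z) ∈ affineSpan ℝ S := by
    intro t
    have := AffineSubspace.smul_vsub_vadd_mem (affineSpan ℝ S) t hsmem hzmem hzmem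
    simpa [vsub_eq_sub, vadd_eq_add, add_comm] using this
  set φ : ℝ → affineSpan ℝ S := fun t => ⟨z + t • (s - z), hmem t⟩ with hφ
  have hcont : Continuous φ := by
    apply Continuous.subtype_mk
    continuity
  have hφ1 : φ 1 = s' := by
    apply Subtype.ext
    simp [hφ, hval]
  have hopen : IsOpen (φ ⁻¹' interior ((Subtype.val : affineSpan ℝ S → E) ⁻¹' S)) :=
    isOpen_interior.preimage hcont
  have h1 : (1:ℝ) ∈ φ ⁻¹' interior ((Subtype.val : affineSpan ℝ S → E) ⁻¹' S) := by
    simp only [Set.mem_preimage, hφ1]; exact hs'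
  obtain ⟨δ, hδ, hball⟩ := Metric.isOpen_iff.mp hopen 1 h1
  refine ⟨δ/2, by linarith, ?_⟩
  have : (1 + δ/2) ∈ Metric.ball (1:ℝ) δ := by
    rw [Metric.mem_ball, Real.dist_eq]
    rw [show (1 + δ/2 - 1 : ℝ) = δ/2 by ring, abs_of_nonneg (by linarith)]
    linarith
  have := interior_subset (hball this)
  simpa using this
end Aux

def GTM (m n : ℕ) (A : Matrix (Fin m) (Fin n) ℝ) (b : Fin m → ℝ) (c : Fin n → ℝ) :
    Matrix (Fin m ⊕ (Fin n ⊕ Unit)) (Fin m ⊕ (Fin n ⊕ Unit)) ℝ :=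
  Matrix.of fun r s =>
    match r, s with
    | Sum.inl _, Sum.inl _ => 0
    | Sum.inl i, Sum.inr (Sum.inl j) => -A i j
    | Sum.inl i, Sum.inr (Sum.inr _) => b i
    | Sum.inr (Sum.inl j), Sum.inl i => A i j
    | Sum.inr (Sum.inl _), Sum.inr (Sum.inl _) => 0
    | Sum.inr (Sum.inl j), Sum.inr (Sum.inr _) => -c j
    | Sum.inr (Sum.inr _), Sum.inl i => -b i
    | Sum.inr (Sum.inr _), Sum.inr (Sum.inl j) => c j
    | Sum.inr (Sum.inr _), Sum.inr (Sum.inr _) => 0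

lemma GT_exists (m n : ℕ) (A : Matrix (Fin m) (Fin n) ℝ) (b : Fin m → ℝ) (c : Fin n → ℝ)
    (zstar : ℝ)
    (hPopt : ∀ x : Fin n → ℝ, ∀ u : Fin m → ℝ,
      (∀ j, 0 ≤ x j) → (∀ i, 0 ≤ u i) → A.mulVec x + u = b → c ⬝ᵥ x ≤ zstar)
    (hDopt : ∀ y : Fin m → ℝ, ∀ v : Fin n → ℝ,
      (∀ i, 0 ≤ y i) → (∀ j, 0 ≤ v j) → Aᵀ.mulVec y - v = c → zstar ≤ b ⬝ᵥ y)
    (xs : Fin n → ℝ) (us : Fin m → ℝ) (ys : Fin m → ℝ) (vs : Fin n → ℝ)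
    (hx0 : ∀ j, 0 ≤ xs j) (hu0 : ∀ i, 0 ≤ us i) (hfp0 : A.mulVec xs + us = b)
    (hvp0 : c ⬝ᵥ xs = zstar)
    (hy0 : ∀ i, 0 ≤ ys i) (hv0 : ∀ j, 0 ≤ vs j) (hfd0 : Aᵀ.mulVec ys - vs = c)
    (hvd0 : b ⬝ᵥ ys = zstar)
    (k : Fin m ⊕ Fin n) :
    ∃ (X : Fin n → ℝ) (U : Fin m → ℝ) (Y : Fin m → ℝ) (V : Fin n → ℝ),
      (∀ j, 0 ≤ X j) ∧ (∀ i, 0 ≤ U i) ∧ A.mulVec X + U = b ∧ c ⬝ᵥ X = zstar ∧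
      (∀ i, 0 ≤ Y i) ∧ (∀ j, 0 ≤ V j) ∧ Aᵀ.mulVec Y - V = c ∧ b ⬝ᵥ Y = zstar ∧
      Sum.elim (fun i => 0 < Y i + U i) (fun j => 0 < X j + V j) k := by
  classical
  set ι := Fin m ⊕ (Fin n ⊕ Unit) with hι
  set M := GTM m n A b c with hM
  have hskew : ∀ r s, M r s = - M s r := by
    rintro (i | j | u) (i' | j' | u') <;> simp [hM, GTM]
  set k' : ι := Sum.elim (fun i => Sum.inl i) (fun j => Sum.inr (Sum.inl j)) k with hk'
  obtain ⟨w, hw0, hMw0, hstrict⟩ := tucker M hskew k'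
  set y : Fin m → ℝ := fun i => w (Sum.inl i) with hy
  set x : Fin n → ℝ := fun j => w (Sum.inr (Sum.inl j)) with hx
  set t : ℝ := w (Sum.inr (Sum.inr ())) with ht
  have hsum : ∀ (f : ι → ℝ), ∑ s, f s
      = (∑ i, f (Sum.inl i)) + ((∑ j, f (Sum.inr (Sum.inl j))) + f (Sum.inr (Sum.inr ()))) := by
    intro f
    rw [Fintype.sum_sum_type, Fintype.sum_sum_type]
    simp
  have hMw1 : ∀ i, M.mulVec w (Sum.inl i) = t * b i - A.mulVec x i := by
    intro i
    simp only [Matrix.mulVec, dotProduct]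
    rw [hsum]
    simp only [hM, GTM, Matrix.of_apply, neg_mul, zero_mul, Finset.sum_const_zero, zero_add]
    simp only [hx, hy, ht]
    rw [Finset.sum_neg_distrib]
    ring
  have hMw2 : ∀ j, M.mulVec w (Sum.inr (Sum.inl j)) = Aᵀ.mulVec y j - t * c j := by
    intro j
    simp only [Matrix.mulVec, dotProduct]
    rw [hsum]
    simp only [hM, GTM, Matrix.of_apply, Matrix.mulVec, dotProduct,
      Matrix.transpose_apply, neg_mul, zero_mul, Finset.sum_const_zero, add_zero, zero_add]
    simp only [hx, hy, ht]
    ring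
  have hMw3 : M.mulVec w (Sum.inr (Sum.inr ())) = c ⬝ᵥ x - b ⬝ᵥ y := by
    simp only [Matrix.mulVec, dotProduct]
    rw [hsum]
    simp only [hM, GTM, Matrix.of_apply, Matrix.mulVec, dotProduct, neg_mul, zero_mul,
      Finset.sum_const_zero, add_zero, zero_add]
    simp only [hx, hy, ht]
    simp [Finset.sum_neg_distrib]
    ring
  have hynn : ∀ i, 0 ≤ y i := fun i => hw0 _
  have hxnn : ∀ j, 0 ≤ x j := fun j => hw0 _
  have htnn : 0 ≤ t := hw0 _
  have hAx : ∀ i, A.mulVec x i ≤ t * b i := by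
    intro i; have := hMw0 (Sum.inl i); rw [hMw1 i] at this; linarith
  have hAty : ∀ j, t * c j ≤ Aᵀ.mulVec y j := by
    intro j; have := hMw0 (Sum.inr (Sum.inl j)); rw [hMw2 j] at this; linarith
  have hby : b ⬝ᵥ y ≤ c ⬝ᵥ x := by
    have := hMw0 (Sum.inr (Sum.inr ())); rw [hMw3] at this; linarith
  -- strictness at k'
  have hstr : Sum.elim (fun i => 0 < y i + (t * b i - A.mulVec x i))
      (fun j => 0 < x j + (Aᵀ.mulVec y j - t * c j)) k := by
    cases k with
    | inl i =>
      have : k' = Sum.inl i := by rw [hk']; rfl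
      rw [this, hMw1 i] at hstrict
      simpa using hstrict
    | inr j =>
      have : k' = Sum.inr (Sum.inl j) := by rw [hk']; rfl
      rw [this, hMw2 j] at hstrict
      simpa using hstrict
  by_cases htpos : 0 < t
  · -- scale by t
    refine ⟨t⁻¹ • x, b - A.mulVec (t⁻¹ • x), t⁻¹ • y, Aᵀ.mulVec (t⁻¹ • y) - c,
      ?_, ?_, ?_, ?_, ?_, ?_, ?_, ?_, ?_⟩
    · intro j; exact smul_nonneg (inv_nonneg.mpr htnn) (hxnn j)
    · intro i
      have : A.mulVec (t⁻¹ • x) i = t⁻¹ * A.mulVec x i := by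
        rw [Matrix.mulVec_smul]; simp
      simp only [Pi.sub_apply, this]
      have h1 := hAx i
      have h2 : t⁻¹ * A.mulVec x i ≤ t⁻¹ * (t * b i) :=
        mul_le_mul_of_nonneg_left h1 (inv_nonneg.mpr htnn)
      rw [← mul_assoc, inv_mul_cancel₀ htpos.ne', one_mul] at h2
      linarith
    · funext i; simp
    · -- value: c ⬝ᵥ (t⁻¹ • x) = zstar
      have hble : b ⬝ᵥ (t⁻¹ • y) ≤ c ⬝ᵥ (t⁻¹ • x) := by
        rw [dotProduct_smul, dotProduct_smul]
        exact mul_le_mul_of_nonneg_left hby (inv_nonneg.mpr htnn)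
      have hple : c ⬝ᵥ (t⁻¹ • x) ≤ zstar := by
        apply hPopt _ (b - A.mulVec (t⁻¹ • x))
        · intro j; exact smul_nonneg (inv_nonneg.mpr htnn) (hxnn j)
        · intro i
          have : A.mulVec (t⁻¹ • x) i = t⁻¹ * A.mulVec x i := by
            rw [Matrix.mulVec_smul]; simp
          simp only [Pi.sub_apply, this]
          have h2 : t⁻¹ * A.mulVec x i ≤ t⁻¹ * (t * b i) :=
            mul_le_mul_of_nonneg_left (hAx i) (inv_nonneg.mpr htnn)
          rw [← mul_assoc, inv_mul_cancel₀ htpos.ne', one_mul] at h2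
          linarith
        · funext i; simp
      have hdge : zstar ≤ b ⬝ᵥ (t⁻¹ • y) := by
        apply hDopt _ (Aᵀ.mulVec (t⁻¹ • y) - c)
        · intro i; exact smul_nonneg (inv_nonneg.mpr htnn) (hynn i)
        · intro j
          have : Aᵀ.mulVec (t⁻¹ • y) j = t⁻¹ * Aᵀ.mulVec y j := by
            rw [Matrix.mulVec_smul]; simp
          simp only [Pi.sub_apply, this]
          have h2 : t⁻¹ * (t * c j) ≤ t⁻¹ * Aᵀ.mulVec y j :=
            mul_le_mul_of_nonneg_left (hAty j) (inv_nonneg.mpr htnn)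
          rw [← mul_assoc, inv_mul_cancel₀ htpos.ne', one_mul] at h2
          linarith
        · funext j; simp
      linarith
    · intro i; exact smul_nonneg (inv_nonneg.mpr htnn) (hynn i)
    · intro j
      have : Aᵀ.mulVec (t⁻¹ • y) j = t⁻¹ * Aᵀ.mulVec y j := by
        rw [Matrix.mulVec_smul]; simp
      simp only [Pi.sub_apply, this]
      have h2 : t⁻¹ * (t * c j) ≤ t⁻¹ * Aᵀ.mulVec y j :=
        mul_le_mul_of_nonneg_left (hAty j) (inv_nonneg.mpr htnn)
      rw [← mul_assoc, inv_mul_cancel₀ htpos.ne', one_mul] at h2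
      linarith
    · funext j; simp
    · -- dual value
      have hble : b ⬝ᵥ (t⁻¹ • y) ≤ c ⬝ᵥ (t⁻¹ • x) := by
        rw [dotProduct_smul, dotProduct_smul]
        exact mul_le_mul_of_nonneg_left hby (inv_nonneg.mpr htnn)
      have hple : c ⬝ᵥ (t⁻¹ • x) ≤ zstar := by
        apply hPopt _ (b - A.mulVec (t⁻¹ • x))
        · intro j; exact smul_nonneg (inv_nonneg.mpr htnn) (hxnn j)
        · intro i
          have : A.mulVec (t⁻¹ • x) i = t⁻¹ * A.mulVec x i := by
            rw [Matrix.mulVec_smul]; simp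
          simp only [Pi.sub_apply, this]
          have h2 : t⁻¹ * A.mulVec x i ≤ t⁻¹ * (t * b i) :=
            mul_le_mul_of_nonneg_left (hAx i) (inv_nonneg.mpr htnn)
          rw [← mul_assoc, inv_mul_cancel₀ htpos.ne', one_mul] at h2
          linarith
        · funext i; simp
      have hdge : zstar ≤ b ⬝ᵥ (t⁻¹ • y) := by
        apply hDopt _ (Aᵀ.mulVec (t⁻¹ • y) - c)
        · intro i; exact smul_nonneg (inv_nonneg.mpr htnn) (hynn i)
        · intro j
          have : Aᵀ.mulVec (t⁻¹ • y) j = t⁻¹ * Aᵀ.mulVec y j := by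
            rw [Matrix.mulVec_smul]; simp
          simp only [Pi.sub_apply, this]
          have h2 : t⁻¹ * (t * c j) ≤ t⁻¹ * Aᵀ.mulVec y j :=
            mul_le_mul_of_nonneg_left (hAty j) (inv_nonneg.mpr htnn)
          rw [← mul_assoc, inv_mul_cancel₀ htpos.ne', one_mul] at h2
          linarith
        · funext j; simp
      linarith
    · -- strictness
      cases k with
      | inl i =>
        simp only [Sum.elim_inl] at hstr ⊢
        have h1 : (t⁻¹ • y) i = t⁻¹ * y i := by simp
        have h2 : (b - A.mulVec (t⁻¹ • x)) i = t⁻¹ * (t * b i - A.mulVec x i) := by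
          have : A.mulVec (t⁻¹ • x) i = t⁻¹ * A.mulVec x i := by
            rw [Matrix.mulVec_smul]; simp
          simp only [Pi.sub_apply, this]
          field_simp
        rw [h1, h2, ← mul_add]
        exact mul_pos (inv_pos.mpr htpos) hstr
      | inr j =>
        simp only [Sum.elim_inr] at hstr ⊢
        have h1 : (t⁻¹ • x) j = t⁻¹ * x j := by simp
        have h2 : (Aᵀ.mulVec (t⁻¹ • y) - c) j = t⁻¹ * (Aᵀ.mulVec y j - t * c j) := by
          have : Aᵀ.mulVec (t⁻¹ • y) j = t⁻¹ * Aᵀ.mulVec y j := by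
            rw [Matrix.mulVec_smul]; simp
          simp only [Pi.sub_apply, this]
          field_simp
        rw [h1, h2, ← mul_add]
        exact mul_pos (inv_pos.mpr htpos) hstr
  · -- t = 0 case
    have ht0 : t = 0 := le_antisymm (not_lt.mp htpos) htnn
    rw [ht0] at hAx hAty hstr
    simp only [zero_mul] at hAx hAty hstr
    -- c ⬝ᵥ x ≤ 0 and 0 ≤ b ⬝ᵥ y
    have hcx : c ⬝ᵥ x ≤ 0 := by
      have hfeas : A.mulVec (xs + x) + (us - A.mulVec x) = b := by
        rw [Matrix.mulVec_add]
        rw [← hfp0]; abel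
      have := hPopt (xs + x) (us - A.mulVec x)
        (fun j => by have := hxnn j; have := hx0 j; simp only [Pi.add_apply]; linarith)
        (fun i => by have := hAx i; have := hu0 i; simp only [Pi.sub_apply]; linarith)
        hfeas
      rw [dotProduct_add, hvp0] at this
      linarith
    have hbyge : 0 ≤ b ⬝ᵥ y := by
      have hfeas : Aᵀ.mulVec (ys + y) - (vs + Aᵀ.mulVec y) = c := by
        rw [Matrix.mulVec_add]
        rw [← hfd0]; abel
      have := hDopt (ys + y) (vs + Aᵀ.mulVec y)
        (fun i => by have := hynn i; have := hy0 i; simp only [Pi.add_apply]; linarith)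
        (fun j => by have := hAty j; have := hv0 j; simp only [Pi.add_apply]; linarith)
        hfeas
      rw [dotProduct_add, hvd0] at this
      linarith
    have hcx0 : c ⬝ᵥ x = 0 := le_antisymm hcx (le_trans hbyge hby)
    have hby0 : b ⬝ᵥ y = 0 := le_antisymm (by linarith) hbyge
    refine ⟨xs + x, us - A.mulVec x, ys + y, vs + Aᵀ.mulVec y,
      (fun j => by have := hxnn j; have := hx0 j; simp only [Pi.add_apply]; linarith),
      (fun i => by have := hAx i; have := hu0 i; simp only [Pi.sub_apply]; linarith),
      ?_, ?_,
      (fun i => by have := hynn i; have := hy0 i; simp only [Pi.add_apply]; linarith),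
      (fun j => by have := hAty j; have := hv0 j; simp only [Pi.add_apply]; linarith),
      ?_, ?_, ?_⟩
    · rw [Matrix.mulVec_add, ← hfp0]; abel
    · rw [dotProduct_add, hvp0, hcx0]; ring
    · rw [Matrix.mulVec_add, ← hfd0]; abel
    · rw [dotProduct_add, hvd0, hby0]; ring
    · cases k with
      | inl i =>
        simp only [Sum.elim_inl] at hstr ⊢
        simp only [Pi.add_apply, Pi.sub_apply]
        have := hy0 i; have := hu0 i
        linarith
      | inr j =>
        simp only [Sum.elim_inr] at hstr ⊢
        simp only [Pi.add_apply]
        have := hx0 j; have := hv0 j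
        linarith

lemma compl_slack (m n : ℕ) (A : Matrix (Fin m) (Fin n) ℝ) (b : Fin m → ℝ) (c : Fin n → ℝ)
    (zstar : ℝ) (x : Fin n → ℝ) (u : Fin m → ℝ) (y : Fin m → ℝ) (v : Fin n → ℝ)
    (hx : ∀ j, 0 ≤ x j) (hu : ∀ i, 0 ≤ u i) (hfp : A.mulVec x + u = b) (hvp : c ⬝ᵥ x = zstar)
    (hy : ∀ i, 0 ≤ y i) (hv : ∀ j, 0 ≤ v j) (hfd : Aᵀ.mulVec y - v = c) (hvd : b ⬝ᵥ y = zstar) :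
    (∀ j, x j * v j = 0) ∧ (∀ i, y i * u i = 0) := by
  have e1 : c ⬝ᵥ x = y ⬝ᵥ A.mulVec x - v ⬝ᵥ x := by
    rw [← hfd, sub_dotProduct]
    congr 1
    rw [Matrix.mulVec_transpose, ← Matrix.dotProduct_mulVec]
  have e2 : b ⬝ᵥ y = y ⬝ᵥ A.mulVec x + u ⬝ᵥ y := by
    rw [← hfp, add_dotProduct, dotProduct_comm (A.mulVec x) y]
  have key : v ⬝ᵥ x + u ⬝ᵥ y = 0 := by
    rw [hvp] at e1; rw [hvd] at e2; linarith
  have h1 : (0:ℝ) ≤ v ⬝ᵥ x := Finset.sum_nonneg fun j _ => mul_nonneg (hv j) (hx j)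
  have h2 : (0:ℝ) ≤ u ⬝ᵥ y := Finset.sum_nonneg fun i _ => mul_nonneg (hu i) (hy i)
  have hvx : v ⬝ᵥ x = 0 := by linarith
  have huy : u ⬝ᵥ y = 0 := by linarith
  constructor
  · intro j
    have := (Finset.sum_eq_zero_iff_of_nonneg
      (fun j _ => mul_nonneg (hv j) (hx j))).mp hvx j (Finset.mem_univ j)
    rw [mul_comm]; exact this
  · intro i
    have := (Finset.sum_eq_zero_iff_of_nonneg
      (fun i _ => mul_nonneg (hu i) (hy i))).mp huy i (Finset.mem_univ i)
    rw [mul_comm]; exact this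

/-- dot product with a fixed vector, as a linear map -/
def dotL {k : Type} [Fintype k] (c : k → ℝ) : (k → ℝ) →ₗ[ℝ] ℝ where
  toFun := fun x => c ⬝ᵥ x
  map_add' := fun a b => dotProduct_add c a b
  map_smul' := fun r a => dotProduct_smul r c a  -- check

lemma linear_eq_on_span {E F : Type} [NormedAddCommGroup E] [NormedSpace ℝ E]
    [NormedAddCommGroup F] [NormedSpace ℝ F]
    (g : E →ₗ[ℝ] F) {S : Set E} {q : F} (h : ∀ p ∈ S, g p = q) :
    ∀ p ∈ affineSpan ℝ S, g p = q :=
  affine_eq_on_span g.toAffineMap h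

/-- Strict complementarity characterizes relative interiors of the optimal faces: a pair of
primal and dual optimal solutions `((x*,u*),(y*,v*))` satisfies `x* + v* > 0` and
`y* + u* > 0` componentwise iff `(x*,u*)` lies in the relative interior of the primal
optimal face and `(y*,v*)` lies in the relative interior of the dual optimal face. -/
theorem strict_complementarity_iff_relative_interior (m n : ℕ)
    (A : Matrix (Fin m) (Fin n) ℝ) (b : Fin m → ℝ) (c : Fin n → ℝ) (zstar : ℝ)
    (FP : Set ((Fin n → ℝ) × (Fin m → ℝ)))
    (hFP : FP = {p | (∀ j, 0 ≤ p.1 j) ∧ (∀ i, 0 ≤ p.2 i) ∧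
      A.mulVec p.1 + p.2 = b ∧ c ⬝ᵥ p.1 = zstar})
    (FD : Set ((Fin m → ℝ) × (Fin n → ℝ)))
    (hFD : FD = {q | (∀ i, 0 ≤ q.1 i) ∧ (∀ j, 0 ≤ q.2 j) ∧
      Aᵀ.mulVec q.1 - q.2 = c ∧ b ⬝ᵥ q.1 = zstar})
    -- `zstar` is the common optimal value of the primal and dual problems:
    (hPopt : ∀ x : Fin n → ℝ, ∀ u : Fin m → ℝ,
      (∀ j, 0 ≤ x j) → (∀ i, 0 ≤ u i) → A.mulVec x + u = b → c ⬝ᵥ x ≤ zstar)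
    (hDopt : ∀ y : Fin m → ℝ, ∀ v : Fin n → ℝ,
      (∀ i, 0 ≤ y i) → (∀ j, 0 ≤ v j) → Aᵀ.mulVec y - v = c → zstar ≤ b ⬝ᵥ y)
    (xs : Fin n → ℝ) (us : Fin m → ℝ) (ys : Fin m → ℝ) (vs : Fin n → ℝ)
    (hxus : (xs, us) ∈ FP) (hyvs : (ys, vs) ∈ FD) :
    ((∀ j, 0 < xs j + vs j) ∧ (∀ i, 0 < ys i + us i)) ↔
      ((xs, us) ∈ intrinsicInterior ℝ FP ∧ (ys, vs) ∈ intrinsicInterior ℝ FD) := by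
  subst hFP hFD
  obtain ⟨hx0, hu0, hfp0, hvp0⟩ := hxus
  obtain ⟨hy0, hv0, hfd0, hvd0⟩ := hyvs
  set FP : Set ((Fin n → ℝ) × (Fin m → ℝ)) := {p | (∀ j, 0 ≤ p.1 j) ∧ (∀ i, 0 ≤ p.2 i) ∧
      A.mulVec p.1 + p.2 = b ∧ c ⬝ᵥ p.1 = zstar} with hFP
  set FD : Set ((Fin m → ℝ) × (Fin n → ℝ)) := {q | (∀ i, 0 ≤ q.1 i) ∧ (∀ j, 0 ≤ q.2 j) ∧
      Aᵀ.mulVec q.1 - q.2 = c ∧ b ⬝ᵥ q.1 = zstar} with hFD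
  have csP : ∀ p ∈ FP, (∀ j, p.1 j * vs j = 0) ∧ (∀ i, ys i * p.2 i = 0) := by
    rintro p ⟨ha, hb, hc, hd⟩
    exact compl_slack m n A b c zstar p.1 p.2 ys vs ha hb hc hd hy0 hv0 hfd0 hvd0
  have csD : ∀ q ∈ FD, (∀ j, xs j * q.2 j = 0) ∧ (∀ i, q.1 i * us i = 0) := by
    rintro q ⟨ha, hb, hc, hd⟩
    exact compl_slack m n A b c zstar xs us q.1 q.2 hx0 hu0 hfp0 hvp0 ha hb hc hd
  constructor
  · rintro ⟨hxv, hyu⟩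
    -- zero coordinates on the affine span of FP
    have hPspan1 : ∀ j, 0 < vs j → ∀ p ∈ affineSpan ℝ FP, p.1 j = 0 := by
      intro j hj
      apply linear_eq_on_span ((LinearMap.proj j).comp
        (LinearMap.fst ℝ (Fin n → ℝ) (Fin m → ℝ)))
      intro p hp
      have := (csP p hp).1 j
      simpa [hj.ne'] using mul_eq_zero.mp this
    have hPspan2 : ∀ i, 0 < ys i → ∀ p ∈ affineSpan ℝ FP, p.2 i = 0 := by
      intro i hi
      apply linear_eq_on_span ((LinearMap.proj i).comp
        (LinearMap.snd ℝ (Fin n → ℝ) (Fin m → ℝ)))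
      intro p hp
      have := (csP p hp).2 i
      simpa [hi.ne'] using mul_eq_zero.mp this
    have hPspan3 : ∀ p ∈ affineSpan ℝ FP, A.mulVec p.1 + p.2 = b := by
      apply linear_eq_on_span (A.mulVecLin.comp (LinearMap.fst ℝ (Fin n → ℝ) (Fin m → ℝ))
        + LinearMap.snd ℝ (Fin n → ℝ) (Fin m → ℝ))
      rintro p ⟨-, -, hc, -⟩
      simpa using hc
    have hPspan4 : ∀ p ∈ affineSpan ℝ FP, c ⬝ᵥ p.1 = zstar := by
      apply linear_eq_on_span ((dotL c).comp (LinearMap.fst ℝ (Fin n → ℝ) (Fin m → ℝ)))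
      rintro p ⟨-, -, -, hd⟩
      simpa [dotL] using hd
    have hDspan1 : ∀ j, 0 < xs j → ∀ q ∈ affineSpan ℝ FD, q.2 j = 0 := by
      intro j hj
      apply linear_eq_on_span ((LinearMap.proj j).comp
        (LinearMap.snd ℝ (Fin m → ℝ) (Fin n → ℝ)))
      intro q hq
      have := (csD q hq).1 j
      simpa [hj.ne'] using mul_eq_zero.mp this
    have hDspan2 : ∀ i, 0 < us i → ∀ q ∈ affineSpan ℝ FD, q.1 i = 0 := by
      intro i hi
      apply linear_eq_on_span ((LinearMap.proj i).comp
        (LinearMap.fst ℝ (Fin m → ℝ) (Fin n → ℝ)))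
      intro q hq
      have := (csD q hq).2 i
      simpa [hi.ne'] using mul_eq_zero.mp this
    have hDspan3 : ∀ q ∈ affineSpan ℝ FD, Aᵀ.mulVec q.1 - q.2 = c := by
      apply linear_eq_on_span (Aᵀ.mulVecLin.comp (LinearMap.fst ℝ (Fin m → ℝ) (Fin n → ℝ))
        - LinearMap.snd ℝ (Fin m → ℝ) (Fin n → ℝ))
      rintro q ⟨-, -, hc, -⟩
      simp only [LinearMap.sub_apply, LinearMap.comp_apply, Matrix.mulVecLin_apply,
        LinearMap.fst_apply, LinearMap.snd_apply]
      exact hc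
    have hDspan4 : ∀ q ∈ affineSpan ℝ FD, b ⬝ᵥ q.1 = zstar := by
      apply linear_eq_on_span ((dotL b).comp (LinearMap.fst ℝ (Fin m → ℝ) (Fin n → ℝ)))
      rintro q ⟨-, -, -, hd⟩
      simpa [dotL] using hd
    have hmemP : (xs, us) ∈ FP := ⟨hx0, hu0, hfp0, hvp0⟩
    have hmemD : (ys, vs) ∈ FD := ⟨hy0, hv0, hfd0, hvd0⟩
    constructor
    · -- primal
      apply mem_intrinsicInterior_of_open (U := {p : (Fin n → ℝ) × (Fin m → ℝ) |
          (∀ j, 0 < xs j → 0 < p.1 j) ∧ (∀ i, 0 < us i → 0 < p.2 i)}) hmemP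
      · -- open
        have : {p : (Fin n → ℝ) × (Fin m → ℝ) |
            (∀ j, 0 < xs j → 0 < p.1 j) ∧ (∀ i, 0 < us i → 0 < p.2 i)}
            = (⋂ j, {p : (Fin n → ℝ) × (Fin m → ℝ) | 0 < xs j → 0 < p.1 j})
              ∩ (⋂ i, {p : (Fin n → ℝ) × (Fin m → ℝ) | 0 < us i → 0 < p.2 i}) := by
          ext p
          simp [Set.mem_iInter, Set.mem_setOf_eq]
        rw [this]
        apply IsOpen.inter
        · apply isOpen_iInter_of_finite
          intro j
          by_cases h : 0 < xs j
          · have : {p : (Fin n → ℝ) × (Fin m → ℝ) | 0 < xs j → 0 < p.1 j}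
                = {p : (Fin n → ℝ) × (Fin m → ℝ) | 0 < p.1 j} := by
              ext p; simp [h]
            rw [this]
            exact isOpen_lt continuous_const ((continuous_apply j).comp continuous_fst)
          · have : {p : (Fin n → ℝ) × (Fin m → ℝ) | 0 < xs j → 0 < p.1 j} = Set.univ := by
              ext p; simp [h]
            rw [this]; exact isOpen_univ
        · apply isOpen_iInter_of_finite
          intro i
          by_cases h : 0 < us i
          · have : {p : (Fin n → ℝ) × (Fin m → ℝ) | 0 < us i → 0 < p.2 i}
                = {p : (Fin n → ℝ) × (Fin m → ℝ) | 0 < p.2 i} := by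
              ext p; simp [h]
            rw [this]
            exact isOpen_lt continuous_const ((continuous_apply i).comp continuous_snd)
          · have : {p : (Fin n → ℝ) × (Fin m → ℝ) | 0 < us i → 0 < p.2 i} = Set.univ := by
              ext p; simp [h]
            rw [this]; exact isOpen_univ
      · exact ⟨fun j h => h, fun i h => h⟩
      · rintro p ⟨hpU, hpSpan⟩
        refine ⟨?_, ?_, hPspan3 p hpSpan, hPspan4 p hpSpan⟩
        · intro j
          by_cases h : 0 < xs j
          · exact (hpU.1 j h).le
          · have hxj : xs j = 0 := le_antisymm (not_lt.mp h) (hx0 j)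
            have hvj : 0 < vs j := by have := hxv j; linarith
            exact (hPspan1 j hvj p hpSpan).ge
        · intro i
          by_cases h : 0 < us i
          · exact (hpU.2 i h).le
          · have hui : us i = 0 := le_antisymm (not_lt.mp h) (hu0 i)
            have hyi : 0 < ys i := by have := hyu i; linarith
            exact (hPspan2 i hyi p hpSpan).ge
    · -- dual
      apply mem_intrinsicInterior_of_open (U := {q : (Fin m → ℝ) × (Fin n → ℝ) |
          (∀ i, 0 < ys i → 0 < q.1 i) ∧ (∀ j, 0 < vs j → 0 < q.2 j)}) hmemD
      · have : {q : (Fin m → ℝ) × (Fin n → ℝ) |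
            (∀ i, 0 < ys i → 0 < q.1 i) ∧ (∀ j, 0 < vs j → 0 < q.2 j)}
            = (⋂ i, {q : (Fin m → ℝ) × (Fin n → ℝ) | 0 < ys i → 0 < q.1 i})
              ∩ (⋂ j, {q : (Fin m → ℝ) × (Fin n → ℝ) | 0 < vs j → 0 < q.2 j}) := by
          ext q
          simp [Set.mem_iInter, Set.mem_setOf_eq]
        rw [this]
        apply IsOpen.inter
        · apply isOpen_iInter_of_finite
          intro i
          by_cases h : 0 < ys i
          · have : {q : (Fin m → ℝ) × (Fin n → ℝ) | 0 < ys i → 0 < q.1 i}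
                = {q : (Fin m → ℝ) × (Fin n → ℝ) | 0 < q.1 i} := by
              ext q; simp [h]
            rw [this]
            exact isOpen_lt continuous_const ((continuous_apply i).comp continuous_fst)
          · have : {q : (Fin m → ℝ) × (Fin n → ℝ) | 0 < ys i → 0 < q.1 i} = Set.univ := by
              ext q; simp [h]
            rw [this]; exact isOpen_univ
        · apply isOpen_iInter_of_finite
          intro j
          by_cases h : 0 < vs j
          · have : {q : (Fin m → ℝ) × (Fin n → ℝ) | 0 < vs j → 0 < q.2 j}
                = {q : (Fin m → ℝ) × (Fin n → ℝ) | 0 < q.2 j} := by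
              ext q; simp [h]
            rw [this]
            exact isOpen_lt continuous_const ((continuous_apply j).comp continuous_snd)
          · have : {q : (Fin m → ℝ) × (Fin n → ℝ) | 0 < vs j → 0 < q.2 j} = Set.univ := by
              ext q; simp [h]
            rw [this]; exact isOpen_univ
      · exact ⟨fun i h => h, fun j h => h⟩
      · rintro q ⟨hqU, hqSpan⟩
        refine ⟨?_, ?_, hDspan3 q hqSpan, hDspan4 q hqSpan⟩
        · intro i
          by_cases h : 0 < ys i
          · exact (hqU.1 i h).le
          · have hyi : ys i = 0 := le_antisymm (not_lt.mp h) (hy0 i)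
            have hui : 0 < us i := by have := hyu i; linarith
            exact (hDspan2 i hui q hqSpan).ge
        · intro j
          by_cases h : 0 < vs j
          · exact (hqU.2 j h).le
          · have hvj : vs j = 0 := le_antisymm (not_lt.mp h) (hv0 j)
            have hxj : 0 < xs j := by have := hxv j; linarith
            exact (hDspan1 j hxj q hqSpan).ge
  · rintro ⟨hPri, hDri⟩
    have hFPzero : ∀ j, xs j = 0 → ∀ p ∈ FP, p.1 j = 0 := by
      intro j hxsj p hp
      obtain ⟨ε, hε, hmem⟩ := exists_stretch_mem hPri hp
      obtain ⟨ha, -, -, -⟩ := hmem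
      have h1 := ha j
      have h2 := hp.1 j
      simp only [Prod.fst_add, Prod.smul_fst, Prod.fst_sub, Pi.add_apply, Pi.smul_apply,
        Pi.sub_apply, smul_eq_mul, hxsj] at h1
      have : p.1 j ≤ 0 := by nlinarith
      linarith
    have hFPzero2 : ∀ i, us i = 0 → ∀ p ∈ FP, p.2 i = 0 := by
      intro i husi p hp
      obtain ⟨ε, hε, hmem⟩ := exists_stretch_mem hPri hp
      obtain ⟨-, ha, -, -⟩ := hmem
      have h1 := ha i
      have h2 := hp.2.1 i
      simp only [Prod.snd_add, Prod.smul_snd, Prod.snd_sub, Pi.add_apply, Pi.smul_apply,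
        Pi.sub_apply, smul_eq_mul, husi] at h1
      have : p.2 i ≤ 0 := by nlinarith
      linarith
    have hFDzero : ∀ j, vs j = 0 → ∀ q ∈ FD, q.2 j = 0 := by
      intro j hvsj q hq
      obtain ⟨ε, hε, hmem⟩ := exists_stretch_mem hDri hq
      obtain ⟨-, ha, -, -⟩ := hmem
      have h1 := ha j
      have h2 := hq.2.1 j
      simp only [Prod.snd_add, Prod.smul_snd, Prod.snd_sub, Pi.add_apply, Pi.smul_apply,
        Pi.sub_apply, smul_eq_mul, hvsj] at h1
      have : q.2 j ≤ 0 := by nlinarith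
      linarith
    have hFDzero2 : ∀ i, ys i = 0 → ∀ q ∈ FD, q.1 i = 0 := by
      intro i hysi q hq
      obtain ⟨ε, hε, hmem⟩ := exists_stretch_mem hDri hq
      obtain ⟨ha, -, -, -⟩ := hmem
      have h1 := ha i
      have h2 := hq.1 i
      simp only [Prod.fst_add, Prod.smul_fst, Prod.fst_sub, Pi.add_apply, Pi.smul_apply,
        Pi.sub_apply, smul_eq_mul, hysi] at h1
      have : q.1 i ≤ 0 := by nlinarith
      linarith
    constructor
    · intro j
      by_contra hcon
      push_neg at hcon
      have hxsj : xs j = 0 := le_antisymm (by have := hv0 j; linarith) (hx0 j)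
      have hvsj : vs j = 0 := le_antisymm (by have := hx0 j; linarith) (hv0 j)
      obtain ⟨X, U, Y, V, hX0, hU0, hXf, hXv, hY0, hV0, hYf, hYv, hstr⟩ :=
        GT_exists m n A b c zstar hPopt hDopt xs us ys vs hx0 hu0 hfp0 hvp0
          hy0 hv0 hfd0 hvd0 (Sum.inr j)
      simp only [Sum.elim_inr] at hstr
      have hXj : X j = 0 := hFPzero j hxsj (X, U) ⟨hX0, hU0, hXf, hXv⟩
      have hVj : V j = 0 := hFDzero j hvsj (Y, V) ⟨hY0, hV0, hYf, hYv⟩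
      rw [hXj, hVj] at hstr
      exact lt_irrefl 0 (by linarith)
    · intro i
      by_contra hcon
      push_neg at hcon
      have hysi : ys i = 0 := le_antisymm (by have := hu0 i; linarith) (hy0 i)
      have husi : us i = 0 := le_antisymm (by have := hy0 i; linarith) (hu0 i)
      obtain ⟨X, U, Y, V, hX0, hU0, hXf, hXv, hY0, hV0, hYf, hYv, hstr⟩ :=
        GT_exists m n A b c zstar hPopt hDopt xs us ys vs hx0 hu0 hfp0 hvp0
          hy0 hv0 hfd0 hvd0 (Sum.inl i)
      simp only [Sum.elim_inl] at hstr
      have hUi : U i = 0 := hFPzero2 i husi (X, U) ⟨hX0, hU0, hXf, hXv⟩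
      have hYi : Y i = 0 := hFDzero2 i hysi (Y, V) ⟨hY0, hV0, hYf, hYv⟩
      rw [hUi, hYi] at hstr
      exact lt_irrefl 0 (by linarith)
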